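/- Let E be the N×K indicator matrix of the orbit partition (E i k = 1 if node i belongs to orbit k, and 0 otherwise), and note that Eᵀ * E is an invertible diagonal K×K matrix whose diagonal entries are the orbit sizes. Define the quotient matrix A_∥ := (Eᵀ * E)⁻¹ * Eᵀ * A * E. Then A * E = E * A_∥; that is, the action of A on vectors constant on orbits is exactly represented by the K×K quotient matrix A_∥. -/

import Mathlib

open Matrix

/-- The `N × N` permutation matrix of a permutation `σ` of `Fin N`, with the convention
`(permMat N σ).mulVec x i = x (σ⁻¹ i)`. -/
def permMat (N : ℕ) (σ : Equiv.Perm (Fin N)) : Matrix (Fin N) (Fin N) ℝ :=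
  Matrix.of fun i j => if σ j = i then (1 : ℝ) else 0

/-- Let `E` be the indicator matrix of the orbit partition of `Fin N` into `K` nonempty
clusters (encoded by the surjective cluster map `c : Fin N → Fin K` whose fibers are exactly
the `G`-orbits).  With the quotient matrix `A_∥ = (Eᵀ * E)⁻¹ * Eᵀ * A * E`, one has
`A * E = E * A_∥`. -/
theorem quotient_matrix_represents_A (N K : ℕ) (A : Matrix (Fin N) (Fin N) ℝ)
    (G : Subgroup (Equiv.Perm (Fin N)))
    (hA : ∀ σ ∈ G, permMat N σ * A = A * permMat N σ)
    (c : Fin N → Fin K)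
    (hc : ∀ i j : Fin N, (∃ σ ∈ G, σ i = j) ↔ c i = c j)
    (hsurj : Function.Surjective c)
    (E : Matrix (Fin N) (Fin K) ℝ)
    (hE : ∀ (i : Fin N) (k : Fin K), E i k = if c i = k then 1 else 0) :
    A * E = E * ((Eᵀ * E)⁻¹ * Eᵀ * A * E) := by
  classical
  -- entrywise permutation matrix multiplication
  have hPA : ∀ (σ : Equiv.Perm (Fin N)) (p q : Fin N),
      (permMat N σ * A) p q = A (σ⁻¹ p) q := by
    intro σ p q
    have : ∀ l : Fin N, (σ l = p) ↔ (l = σ⁻¹ p) := by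
      intro l; constructor
      · intro h; simpa using congrArg σ.symm h
      · intro h; subst h; simp
    simp only [Matrix.mul_apply, permMat, Matrix.of_apply, this, ite_mul, one_mul,
      zero_mul]
    simp
  have hAP : ∀ (σ : Equiv.Perm (Fin N)) (p q : Fin N),
      (A * permMat N σ) p q = A p (σ q) := by
    intro σ p q
    simp only [Matrix.mul_apply, permMat, Matrix.of_apply, mul_ite, mul_one, mul_zero]
    rw [Finset.sum_ite_eq Finset.univ (σ q) (fun l => A p l)]
    simp
  -- commutation, entrywise
  have hcomm : ∀ σ ∈ G, ∀ i j : Fin N, A (σ i) j = A i (σ⁻¹ j) := by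
    intro σ hσ i j
    have h1 := hPA σ (σ i) (σ⁻¹ j)
    have h2 := hAP σ (σ i) (σ⁻¹ j)
    rw [hA σ hσ] at h1
    rw [h2] at h1
    simp at h1
    rw [h1]
    rfl
  -- rows of E invariant under G
  have hcE : ∀ σ ∈ G, ∀ j : Fin N, c (σ j) = c j := by
    intro σ hσ j
    exact ((hc j (σ j)).mp ⟨σ, hσ, rfl⟩).symm
  -- A*E rows constant on orbits
  have hinv : ∀ σ ∈ G, ∀ (i : Fin N) (k : Fin K), (A * E) (σ i) k = (A * E) i k := by
    intro σ hσ i k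
    simp only [Matrix.mul_apply]
    calc ∑ j, A (σ i) j * E j k = ∑ j, A i (σ⁻¹ j) * E j k := by
          refine Finset.sum_congr rfl fun j _ => ?_
          rw [hcomm σ hσ]
        _ = ∑ j, A i j * E (σ j) k := by
          rw [← Equiv.sum_comp σ (fun j => A i (σ⁻¹ j) * E j k)]
          simp
        _ = ∑ j, A i j * E j k := by
          refine Finset.sum_congr rfl fun j _ => ?_
          rw [hE, hE, hcE σ hσ]
  have hconst : ∀ i i' : Fin N, c i = c i' → ∀ k, (A * E) i k = (A * E) i' k := by
    intro i i' h k
    obtain ⟨σ, hσ, hσi⟩ := (hc i i').mpr h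
    rw [← hσi, hinv σ hσ]
  -- the quotient matrix B
  set B : Matrix (Fin K) (Fin K) ℝ :=
    Matrix.of fun k l => (A * E) (Function.surjInv hsurj k) l with hB
  have hAEB : A * E = E * B := by
    ext i l
    have : (E * B) i l = B (c i) l := by
      simp only [Matrix.mul_apply, hE, ite_mul, one_mul, zero_mul]
      rw [Finset.sum_ite_eq Finset.univ (c i) (fun k => B k l)]
      simp
    rw [this, hB]
    exact hconst i (Function.surjInv hsurj (c i))
      (Function.surjInv_eq hsurj (c i)).symm l
  -- Eᵀ E is diagonal with nonzero diagonal
  have hdiag : Eᵀ * E = Matrix.diagonal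
      (fun k => ((Finset.univ.filter (fun i => c i = k)).card : ℝ)) := by
    ext k l
    simp only [Matrix.mul_apply, Matrix.transpose_apply, hE]
    by_cases hkl : k = l
    · subst hkl
      rw [Matrix.diagonal_apply_eq]
      have h1 : ∀ x : Fin N, ((if c x = k then (1:ℝ) else 0) * if c x = k then 1 else 0)
          = if c x = k then 1 else 0 := by
        intro x; by_cases h : c x = k <;> simp [h]
      simp only [h1]
      rw [Finset.sum_boole]
    · rw [Matrix.diagonal_apply_ne _ hkl]
      refine Finset.sum_eq_zero fun x _ => ?_
      by_cases h : c x = k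
      · by_cases h' : c x = l
        · exact absurd (h.symm.trans h') hkl
        · simp [h']
      · simp [h]
  have hdetne : (Eᵀ * E).det ≠ 0 := by
    rw [hdiag, Matrix.det_diagonal]
    refine Finset.prod_ne_zero_iff.mpr fun k _ => ?_
    have : (Finset.univ.filter (fun i => c i = k)).Nonempty := by
      obtain ⟨i, hi⟩ := hsurj k
      exact ⟨i, by simp [hi]⟩
    simpa using Finset.card_ne_zero_of_mem this.choose_spec
  have hunit : IsUnit (Eᵀ * E).det := isUnit_iff_ne_zero.mpr hdetne
  have hcancel : (Eᵀ * E)⁻¹ * (Eᵀ * E) = 1 := Matrix.nonsing_inv_mul _ hunit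
  calc A * E = E * B := hAEB
    _ = E * ((Eᵀ * E)⁻¹ * Eᵀ * A * E) := by
        congr 1
        rw [Matrix.mul_assoc ((Eᵀ * E)⁻¹ * Eᵀ) A E, Matrix.mul_assoc (Eᵀ * E)⁻¹ Eᵀ (A * E),
          hAEB, ← Matrix.mul_assoc Eᵀ E B, ← Matrix.mul_assoc, hcancel, Matrix.one_mul]
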